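/- For a functor G: N^r → Vect_K, G has finite dimensional values if and only if G/rad(G) has finite dimensional values. -/

import Mathlib

open CategoryTheory CategoryTheory.Limits

set_option synthInstance.maxHeartbeats 1000000
set_option maxHeartbeats 1000000

attribute [local instance 2000] Preorder.smallCategory

/-- The poset of `r`-tuples of non-negative rational numbers, with the componentwise order. -/
abbrev Qr (r : ℕ) := Fin r → ℚ≥0

/-- The poset of `r`-tuples of natural numbers, with the componentwise order. -/
abbrev Nr (r : ℕ) := Fin r → ℕ

/-- `bfloor α v = join {w ∈ ℕ^r | α w ≤ v}`, computed componentwise as `⌊vᵢ/α⌋`. -/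
def bfloor (α : ℚ≥0) {r : ℕ} (v : Qr r) : Nr r := fun i => Nat.floor ((v i : ℚ) / (α : ℚ))

/-- The embedding `α : ℕ^r → ℚ≥0^r`, `w ↦ α w`. -/
def embQ (α : ℚ≥0) {r : ℕ} (w : Nr r) : Qr r := fun i => α * (w i : ℚ≥0)

theorem bfloor_mono (α : ℚ≥0) (r : ℕ) : Monotone (bfloor α (r := r)) := by
  intro v w h i
  exact Nat.floor_mono (by gcongr; exact_mod_cast h i)

theorem embQ_mono (α : ℚ≥0) (r : ℕ) : Monotone (embQ α (r := r)) := by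
  intro v w h i
  dsimp [embQ]
  gcongr
  exact_mod_cast h i

/-- A functor `G : ℚ≥0^r ⥤ C` is `α`-tame if `G(α bα v ≤ v)` is an isomorphism for every `v`,
i.e. `G` is (isomorphic to) the left Kan extension along `α : ℕ^r → ℚ≥0^r` of its restriction;
equivalently, `G` is constant on the fundamental domains of `α`. -/
def IsAlphaTame {C : Type*} [Category C] (α : ℚ≥0) {r : ℕ} (G : Qr r ⥤ C) : Prop :=
  ∀ (v : Qr r) (h : embQ α (bfloor α v) ≤ v), IsIso (G.map (homOfLE h))

/-- A functor is tame if it is `α`-tame for some positive rational `α`. -/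
def IsTame {C : Type*} [Category C] {r : ℕ} (G : Qr r ⥤ C) : Prop :=
  ∃ α : ℚ≥0, 0 < α ∧ IsAlphaTame α G

/-- The radical of `G : ℕ^r ⥤ Vect_K` at `v`: the sum of the images of `G(u < v)` over all
`u < v`. -/
noncomputable def radSub (K : Type) [Field K] {r : ℕ} (G : Nr r ⥤ ModuleCat K) (v : Nr r) :
    Submodule K (G.obj v) :=
  ⨆ (u : Nr r) (h : u < v), LinearMap.range (G.map (homOfLE h.le)).hom

instance lt_finite (r : ℕ) (v : Nr r) : Finite {u : Nr r // u < v} := by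
  have hsub : {u : Nr r | u < v} ⊆ Set.pi Set.univ (fun i => Set.Iic (v i)) := by
    intro u hu i _
    have hu' : u < v := hu
    exact hu'.le i
  exact (Set.Finite.subset (Set.Finite.pi (fun i => Set.finite_Iic _)) hsub).to_subtype

/-- `G : ℕ^r ⥤ Vect_K` has finite dimensional values iff `G/rad(G)` has finite dimensional
values. -/
theorem finiteDimensional_iff_quotient_radical (K : Type) [Field K] (r : ℕ)
    (G : Nr r ⥤ ModuleCat K) :
    (∀ v : Nr r, FiniteDimensional K (G.obj v)) ↔
      (∀ v : Nr r, FiniteDimensional K (G.obj v ⧸ radSub K G v)) := by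
  constructor
  · intro h v
    have := h v
    infer_instance
  · intro h v
    suffices H : ∀ n : ℕ, ∀ w : Nr r, (∑ i, w i) = n → FiniteDimensional K (G.obj w) from
      H (∑ i, v i) v rfl
    intro n
    induction n using Nat.strong_induction_on with
    | _ n IH =>
      intro w hw
      have hrad : FiniteDimensional K (radSub K G w) := by
        have : radSub K G w =
            ⨆ u : {u : Nr r // u < w}, LinearMap.range (G.map (homOfLE u.2.le)).hom := by
          rw [radSub, iSup_subtype']
        rw [this]
        have : ∀ u : {u : Nr r // u < w},
            FiniteDimensional K (LinearMap.range (G.map (homOfLE u.2.le)).hom) := by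
          intro u
          have hlt : (∑ i, u.1 i) < n := by
            rw [← hw]
            rcases Pi.lt_def.mp u.2 with ⟨hle, i, hi⟩
            exact Finset.sum_lt_sum (fun j _ => hle j) ⟨i, Finset.mem_univ i, hi⟩
          have := IH _ hlt u.1 rfl
          exact LinearMap.finiteDimensional_range _
        infer_instance
      have hq : FiniteDimensional K (G.obj w ⧸ radSub K G w) := h w
      exact (IsNoetherian.iff_fg).mp <| (isNoetherian_iff_submodule_quotient (radSub K G w)).mpr
        ⟨(IsNoetherian.iff_fg).mpr hrad, (IsNoetherian.iff_fg).mpr hq⟩
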